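/- Let C1 and C2 be F-linear triangulated categories equipped with weight structures, r : C1 → C2 an F-linear exact (triangulated) functor which is weight exact and whose induced functor r_{w=0} on hearts is full. In the situation of the proof of Theorem 0C: if M ∈ C1 admits a minimal weight filtration M_{≤-1} → M → M_{≥0} →(δ) M_{≤-1}[1] concentrated at 0 and r(M) = 0, then r(M_{≤-1}) = 0 and r(M_{≥0}) = 0. (The point being that r(δ), being simultaneously an isomorphism by the exact triangle and an element of the radical of C2, forces both objects to vanish.) -/

import Mathlib

open CategoryTheory CategoryTheory.Limits CategoryTheory.Pretriangulated

namespace Paper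

/-- A morphism `f : X ⟶ Y` belongs to the radical of a preadditive category if,
for every `g : Y ⟶ X`, the endomorphism `𝟙 X - g ∘ f` is invertible. -/
def InRadical {C : Type*} [Category C] [Preadditive C] {X Y : C} (f : X ⟶ Y) : Prop :=
  ∀ g : Y ⟶ X, IsIso (𝟙 X - f ≫ g)

/-- The Jacobson radical of a (possibly noncommutative) ring, as a two-sided ideal. -/
def ringRadical (R : Type*) [Ring R] : TwoSidedIdeal R :=
  TwoSidedIdeal.jacobson ⊥

/-- A ring is semi-primary if its (Jacobson) radical is nilpotent and the quotient by
the radical is a semisimple ring. -/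
def IsSemiprimaryRing (R : Type*) [Ring R] : Prop :=
  IsSemisimpleRing (ringRadical R).ringCon.Quotient ∧
    ∃ n : ℕ, ∀ f : Fin n → R, (∀ i, f i ∈ ringRadical R) → (List.ofFn f).prod = 0

/-- A class of objects of a preadditive category is semi-primary (André–Kahn) if the
endomorphism ring of each of its objects is a semi-primary ring; for an object `X`,
the radical ideal `rad(X,X)` is exactly the Jacobson radical of `End X`. -/
def SemiprimaryOn {C : Type*} [Category C] [Preadditive C] (P : Set C) : Prop :=
  ∀ X : C, X ∈ P → IsSemiprimaryRing (CategoryTheory.End X)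

/-- A class of objects is pseudo-Abelian (idempotent complete) if every idempotent
endomorphism of one of its objects splits through an object of the class. -/
def PseudoAbelianOn {C : Type*} [Category C] [Preadditive C] (P : Set C) : Prop :=
  ∀ X : C, X ∈ P → ∀ e : X ⟶ X, e ≫ e = e →
    ∃ (Y : C) (_ : Y ∈ P) (p : X ⟶ Y) (i : Y ⟶ X), p ≫ i = e ∧ i ≫ p = 𝟙 Y

variable (C : Type*) [Category C] [Preadditive C] [HasZeroObject C] [HasShift C ℤ]
  [∀ n : ℤ, (CategoryTheory.shiftFunctor C n).Additive] [Pretriangulated C]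

/-- A weight structure on a pretriangulated category: classes `le = C_{w≤0}` and
`ge = C_{w≥0}`, additive (containing zero objects, closed under finite direct sums)
and closed under retracts, with `C_{w≤0} ⊆ C_{w≤1}`, `C_{w≥1} ⊆ C_{w≥0}`,
orthogonality, and existence of weight decompositions. -/
structure WeightStructure where
  le : Set C
  ge : Set C
  le_retract : ∀ {X Y : C} (i : X ⟶ Y) (p : Y ⟶ X), i ≫ p = 𝟙 X → Y ∈ le → X ∈ le
  ge_retract : ∀ {X Y : C} (i : X ⟶ Y) (p : Y ⟶ X), i ≫ p = 𝟙 X → Y ∈ ge → X ∈ ge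
  le_zero : ∀ X : C, IsZero X → X ∈ le
  ge_zero : ∀ X : C, IsZero X → X ∈ ge
  le_add : ∀ {X Y : C} (b : BinaryBicone X Y), b.IsBilimit → X ∈ le → Y ∈ le → b.pt ∈ le
  ge_add : ∀ {X Y : C} (b : BinaryBicone X Y), b.IsBilimit → X ∈ ge → Y ∈ ge → b.pt ∈ ge
  le_shift : ∀ X : C, X ∈ le → X⟦(-1 : ℤ)⟧ ∈ le
  ge_shift : ∀ X : C, X ∈ ge → X⟦(1 : ℤ)⟧ ∈ ge
  orthogonal : ∀ {X Y : C}, X ∈ le → Y⟦(-1 : ℤ)⟧ ∈ ge → ∀ f : X ⟶ Y, f = 0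
  exists_decomp : ∀ M : C, ∃ (A B : C) (f : A ⟶ M) (g : M ⟶ B) (h : B ⟶ A⟦(1 : ℤ)⟧),
    (Triangle.mk f g h ∈ distTriang C) ∧ A ∈ le ∧ B⟦(-1 : ℤ)⟧ ∈ ge

namespace WeightStructure

variable {C} (w : WeightStructure C)

/-- `C_{w ≤ n} := C_{w ≤ 0}[n]`. -/
def leN (n : ℤ) : Set C := {X : C | X⟦-n⟧ ∈ w.le}

/-- `C_{w ≥ n} := C_{w ≥ 0}[n]`. -/
def geN (n : ℤ) : Set C := {X : C | X⟦-n⟧ ∈ w.ge}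

/-- The heart `C_{w = 0} = C_{w ≤ 0} ∩ C_{w ≥ 0}`. -/
def heart : Set C := w.leN 0 ∩ w.geN 0

/-- The weight structure is bounded if every object lies in
`C_{w ≥ m} ∩ C_{w ≤ n}` for some integers `m ≤ n`. -/
def Bounded : Prop := ∀ M : C, ∃ m n : ℤ, m ≤ n ∧ M ∈ w.geN m ∧ M ∈ w.leN n

end WeightStructure

/-- A weight filtration of `M` concentrated at `n`: an exact triangle
`M_{≤ n-1} ⟶ M ⟶ M_{≥ n} ⟶(δ) M_{≤ n-1}[1]` with the two outer terms in
`C_{w ≤ n-1}` and `C_{w ≥ n}` respectively. -/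
def IsWeightFiltrationAt {C : Type*} [Category C] [Preadditive C] [HasZeroObject C]
    [HasShift C ℤ] [∀ n : ℤ, (CategoryTheory.shiftFunctor C n).Additive] [Pretriangulated C]
    (w : WeightStructure C) (n : ℤ) {A M B : C}
    (f : A ⟶ M) (g : M ⟶ B) (δ : B ⟶ A⟦(1 : ℤ)⟧) : Prop :=
  (Triangle.mk f g δ ∈ distTriang C) ∧ A ∈ w.leN (n - 1) ∧ B ∈ w.geN n

/-- A minimal weight filtration concentrated at `n`: a weight filtration concentrated
at `n` whose connecting morphism lies in the radical. -/
def IsMinimalWeightFiltrationAt {C : Type*} [Category C] [Preadditive C] [HasZeroObject C]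
    [HasShift C ℤ] [∀ n : ℤ, (CategoryTheory.shiftFunctor C n).Additive] [Pretriangulated C]
    (w : WeightStructure C) (n : ℤ) {A M B : C}
    (f : A ⟶ M) (g : M ⟶ B) (δ : B ⟶ A⟦(1 : ℤ)⟧) : Prop :=
  IsWeightFiltrationAt w n f g δ ∧ InRadical δ

/-- `M` is without weights `α, α+1, …, β` if it admits a weight filtration avoiding
these weights. -/
def WithoutWeights {C : Type*} [Category C] [Preadditive C] [HasZeroObject C]
    [HasShift C ℤ] [∀ n : ℤ, (CategoryTheory.shiftFunctor C n).Additive] [Pretriangulated C]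
    (w : WeightStructure C) (α β : ℤ) (M : C) : Prop :=
  ∃ (A B : C) (f : A ⟶ M) (g : M ⟶ B) (δ : B ⟶ A⟦(1 : ℤ)⟧),
    (Triangle.mk f g δ ∈ distTriang C) ∧ A ∈ w.leN (α - 1) ∧ B ∈ w.geN (β + 1)

/-- A functor is weight exact if it respects both classes of the weight structures. -/
def WeightExact {C₁ : Type*} [Category C₁] [Preadditive C₁] [HasZeroObject C₁] [HasShift C₁ ℤ]
    [∀ n : ℤ, (CategoryTheory.shiftFunctor C₁ n).Additive] [Pretriangulated C₁]
    {C₂ : Type*} [Category C₂] [Preadditive C₂] [HasZeroObject C₂] [HasShift C₂ ℤ]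
    [∀ n : ℤ, (CategoryTheory.shiftFunctor C₂ n).Additive] [Pretriangulated C₂]
    (w₁ : WeightStructure C₁) (w₂ : WeightStructure C₂) (r : C₁ ⥤ C₂) : Prop :=
  (∀ X : C₁, X ∈ w₁.le → r.obj X ∈ w₂.le) ∧ (∀ X : C₁, X ∈ w₁.ge → r.obj X ∈ w₂.ge)


section Helpers

variable {C : Type*} [Category C] [Preadditive C] [HasZeroObject C] [HasShift C ℤ]
  [∀ n : ℤ, (CategoryTheory.shiftFunctor C n).Additive] [Pretriangulated C]
  (w : WeightStructure C)

lemma le_of_iso {X Y : C} (e : X ≅ Y) (h : Y ∈ w.le) : X ∈ w.le :=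
  w.le_retract e.hom e.inv e.hom_inv_id h

lemma ge_of_iso {X Y : C} (e : X ≅ Y) (h : Y ∈ w.ge) : X ∈ w.ge :=
  w.ge_retract e.hom e.inv e.hom_inv_id h

lemma mem_leN_zero {X : C} (h : X ∈ w.le) : X ∈ w.leN 0 := by
  show X⟦-(0 : ℤ)⟧ ∈ w.le
  rw [neg_zero]
  exact le_of_iso w ((shiftFunctorZero C ℤ).app X) h

lemma mem_geN_zero {X : C} (h : X ∈ w.ge) : X ∈ w.geN 0 := by
  show X⟦-(0 : ℤ)⟧ ∈ w.ge
  rw [neg_zero]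
  exact ge_of_iso w ((shiftFunctorZero C ℤ).app X) h

lemma ge_of_geN_zero {X : C} (h : X ∈ w.geN 0) : X ∈ w.ge := by
  have h' : X⟦-(0 : ℤ)⟧ ∈ w.ge := h
  rw [neg_zero] at h'
  exact ge_of_iso w ((shiftFunctorZero C ℤ).app X).symm h'

/-- Orthogonality in the shifted form: if `X⟦1⟧ ∈ C_{w≤0}` and `Y ∈ C_{w≥0}` then
`Hom(X, Y) = 0`. -/
lemma orth_shift {X Y : C} (hX : X⟦(1 : ℤ)⟧ ∈ w.le) (hY : Y ∈ w.ge) (φ : X ⟶ Y) : φ = 0 := by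
  have h2 : (Y⟦(1 : ℤ)⟧)⟦(-1 : ℤ)⟧ ∈ w.ge :=
    ge_of_iso w ((shiftFunctorCompIsoId C (1 : ℤ) (-1 : ℤ) (by ring)).app Y) hY
  have h3 : (shiftFunctor C (1 : ℤ)).map φ = 0 := w.orthogonal hX h2 _
  refine (shiftFunctor C (1 : ℤ)).map_injective ?_
  rw [h3, Functor.map_zero]

/-- `C_{w≤0}` is closed under extensions. -/
lemma le_ext (T : Triangle C) (hT : T ∈ distTriang C)
    (h1 : T.obj₁ ∈ w.le) (h3 : T.obj₃ ∈ w.le) : T.obj₂ ∈ w.le := by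
  obtain ⟨Q₁, Q₂, u, v, s, hdist, hQ₁, hQ₂⟩ := w.exists_decomp T.obj₂
  have hv : v = 0 := by
    have h1v : T.mor₁ ≫ v = 0 := w.orthogonal h1 hQ₂ _
    obtain ⟨q, hq⟩ := Triangle.yoneda_exact₂ T hT v h1v
    rw [hq, w.orthogonal h3 hQ₂ q, comp_zero]
  obtain ⟨s', hs'⟩ := Triangle.coyoneda_exact₂ _ hdist (𝟙 T.obj₂)
    (by show 𝟙 T.obj₂ ≫ v = 0; rw [hv]; exact comp_zero)
  exact w.le_retract s' u hs'.symm hQ₁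

/-- `C_{w≥0}` is closed under extensions. -/
lemma ge_ext (T : Triangle C) (hT : T ∈ distTriang C)
    (h1 : T.obj₁ ∈ w.ge) (h3 : T.obj₃ ∈ w.ge) : T.obj₂ ∈ w.ge := by
  obtain ⟨X₀, Y₀, u, v, s, hdist, hX₀, hY₀⟩ := w.exists_decomp (T.obj₂⟦(1 : ℤ)⟧)
  -- the double rotation : T.obj₃ ⟶ T.obj₁⟦1⟧ ⟶ T.obj₂⟦1⟧ ⟶ T.obj₃⟦1⟧
  have hT' : T.rotate.rotate ∈ distTriang C :=
    rot_of_distTriang _ (rot_of_distTriang _ hT)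
  have h1' : (T.obj₁⟦(1 : ℤ)⟧)⟦(-1 : ℤ)⟧ ∈ w.ge :=
    ge_of_iso w ((shiftFunctorCompIsoId C (1 : ℤ) (-1 : ℤ) (by ring)).app _) h1
  have h3' : (T.obj₃⟦(1 : ℤ)⟧)⟦(-1 : ℤ)⟧ ∈ w.ge :=
    ge_of_iso w ((shiftFunctorCompIsoId C (1 : ℤ) (-1 : ℤ) (by ring)).app _) h3
  have hu : u = 0 := by
    have h0 : u ≫ T.rotate.rotate.mor₃ = 0 := w.orthogonal hX₀ h3' _
    obtain ⟨q, hq⟩ := Triangle.coyoneda_exact₃ _ hT' u h0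
    rw [hq, w.orthogonal hX₀ h1' q]; exact zero_comp
  obtain ⟨s', hs'⟩ := Triangle.yoneda_exact₂ _ hdist (𝟙 (T.obj₂⟦(1 : ℤ)⟧))
    (by show u ≫ 𝟙 (T.obj₂⟦(1 : ℤ)⟧) = 0; rw [hu]; exact zero_comp)
  have hmem : (T.obj₂⟦(1 : ℤ)⟧)⟦(-1 : ℤ)⟧ ∈ w.ge := by
    refine w.ge_retract ((shiftFunctor C (-1 : ℤ)).map v) ((shiftFunctor C (-1 : ℤ)).map s') ?_ hY₀
    change 𝟙 _ = v ≫ s' at hs'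
    exact ((shiftFunctor C (-1 : ℤ)).map_comp v s').symm.trans ((congrArg (shiftFunctor C (-1 : ℤ)).map hs'.symm).trans ((shiftFunctor C (-1 : ℤ)).map_id _))
  exact ge_of_iso w ((shiftFunctorCompIsoId C (1 : ℤ) (-1 : ℤ) (by ring)).app _).symm hmem

end Helpers

theorem statement15
    (F : Type*) [Field F] [CharZero F]
    {C₁ : Type*} [Category C₁] [Preadditive C₁] [HasZeroObject C₁] [HasShift C₁ ℤ]
    [∀ n : ℤ, (CategoryTheory.shiftFunctor C₁ n).Additive] [Pretriangulated C₁] [CategoryTheory.Linear F C₁]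
    {C₂ : Type*} [Category C₂] [Preadditive C₂] [HasZeroObject C₂] [HasShift C₂ ℤ]
    [∀ n : ℤ, (CategoryTheory.shiftFunctor C₂ n).Additive] [Pretriangulated C₂] [CategoryTheory.Linear F C₂]
    (w₁ : WeightStructure C₁) (w₂ : WeightStructure C₂)
    (r : C₁ ⥤ C₂) [r.Additive] [Functor.Linear F r] [r.CommShift ℤ] [r.IsTriangulated]
    (hwe : WeightExact w₁ w₂ r)
    (hfull : ∀ X Y : C₁, X ∈ w₁.heart → Y ∈ w₁.heart →
      ∀ g : r.obj X ⟶ r.obj Y, ∃ f : X ⟶ Y, r.map f = g)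
    {A M B : C₁} (f : A ⟶ M) (g : M ⟶ B) (δ : B ⟶ A⟦(1 : ℤ)⟧)
    (hmin : IsMinimalWeightFiltrationAt w₁ 0 f g δ)
    (hM : IsZero (r.obj M)) :
    IsZero (r.obj A) ∧ IsZero (r.obj B) := by
  obtain ⟨⟨hTdist, hA, hB⟩, hrad⟩ := hmin
  have hA1 : A⟦(1 : ℤ)⟧ ∈ w₁.le := by
    have h' : A⟦-((0 : ℤ) - 1)⟧ ∈ w₁.le := hA
    rwa [show -((0 : ℤ) - 1) = 1 by norm_num] at h'
  have hBge : B ∈ w₁.ge := ge_of_geN_zero w₁ hB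
  -- `r.map δ` is an isomorphism
  have hS : r.mapTriangle.obj (Triangle.mk f g δ).rotate ∈ distTriang C₂ :=
    r.map_distinguished _ (rot_of_distTriang _ hTdist)
  have hiso : IsIso (r.map δ) := (Triangle.isZero₁_iff_isIso₂ _ hS).1 (by exact hM)
  -- weight decomposition of B
  obtain ⟨B', B'', uB, vB, wB, hTB, hB'le, hB''⟩ := w₁.exists_decomp B
  have hB'ge : B' ∈ w₁.ge := ge_ext w₁ _ (inv_rot_of_distTriang _ hTB) hB'' hBge
  -- weight decomposition of A⟦1⟧, shifted down
  obtain ⟨X₀, Y₀, u, v, s, hdA, hX₀, hY₀⟩ := w₁.exists_decomp ((A⟦(1 : ℤ)⟧)⟦(1 : ℤ)⟧)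
  have hT2 : (Triangle.mk u v s).invRotate.invRotate.invRotate ∈ distTriang C₁ :=
    inv_rot_of_distTriang _ (inv_rot_of_distTriang _ (inv_rot_of_distTriang _ hdA))
  have hT2 : (Triangle.mk u v s).invRotate.invRotate.invRotate ∈ distTriang C₁ :=
    inv_rot_of_distTriang _ (inv_rot_of_distTriang _ (inv_rot_of_distTriang _ hdA))
  set T₂ : Triangle C₁ := (Triangle.mk u v s).invRotate.invRotate.invRotate with hT₂def
  let β : ((A⟦(1 : ℤ)⟧)⟦(1 : ℤ)⟧)⟦(-1 : ℤ)⟧ ≅ A⟦(1 : ℤ)⟧ :=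
    (shiftFunctorCompIsoId C₁ (1 : ℤ) (-1 : ℤ) (by ring)).app (A⟦(1 : ℤ)⟧)
  have hWle : ((A⟦(1 : ℤ)⟧)⟦(1 : ℤ)⟧)⟦(-1 : ℤ)⟧ ∈ w₁.le := le_of_iso w₁ β hA1
  have hXle1 : ((X₀⟦(-1 : ℤ)⟧)⟦(1 : ℤ)⟧) ∈ w₁.le :=
    le_of_iso w₁ ((shiftFunctorCompIsoId C₁ (-1 : ℤ) (1 : ℤ) (by ring)).app X₀) hX₀
  have hYle : Y₀⟦(-1 : ℤ)⟧ ∈ w₁.le :=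
    le_ext w₁ _ (rot_of_distTriang _ hT2) hWle hXle1
  have hYheart : Y₀⟦(-1 : ℤ)⟧ ∈ w₁.heart := ⟨mem_leN_zero w₁ hYle, mem_geN_zero w₁ hY₀⟩
  have hB'heart : B' ∈ w₁.heart := ⟨mem_leN_zero w₁ hB'le, mem_geN_zero w₁ hB'ge⟩
  -- images in C₂
  have hWle₂ : r.obj (((A⟦(1 : ℤ)⟧)⟦(1 : ℤ)⟧)⟦(-1 : ℤ)⟧) ∈ w₂.le := hwe.1 _ hWle
  have hB''₂ : (r.obj B'')⟦(-1 : ℤ)⟧ ∈ w₂.ge :=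
    ge_of_iso w₂ ((r.commShiftIso (-1 : ℤ)).app B'').symm (hwe.2 _ hB'')
  have hB'ge₂ : r.obj B' ∈ w₂.ge := hwe.2 _ hB'ge
  have hX₂ : (r.obj (X₀⟦(-1 : ℤ)⟧))⟦(1 : ℤ)⟧ ∈ w₂.le :=
    le_of_iso w₂ ((r.commShiftIso (1 : ℤ)).app (X₀⟦(-1 : ℤ)⟧)).symm (hwe.1 _ hXle1)
  -- lift the inverse of r.map δ
  set σ : r.obj (A⟦(1 : ℤ)⟧) ⟶ r.obj B := inv (r.map δ) with hσdef
  set σt : r.obj (((A⟦(1 : ℤ)⟧)⟦(1 : ℤ)⟧)⟦(-1 : ℤ)⟧) ⟶ r.obj B := r.map β.hom ≫ σ with hσtdef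
  have hSB : r.mapTriangle.obj (Triangle.mk uB vB wB) ∈ distTriang C₂ :=
    r.map_distinguished _ hTB
  have h1 : σt ≫ r.map vB = 0 := w₂.orthogonal hWle₂ hB''₂ _
  obtain ⟨σ₁, hσ₁⟩ := Triangle.coyoneda_exact₂ _ hSB σt h1
  change σt = σ₁ ≫ r.map uB at hσ₁
  have hSA : r.mapTriangle.obj T₂ ∈ distTriang C₂ := r.map_distinguished _ hT2
  have h2 : r.map T₂.mor₁ ≫ σ₁ = 0 := orth_shift w₂ hX₂ hB'ge₂ _
  obtain ⟨σ₂, hσ₂⟩ := Triangle.yoneda_exact₂ _ hSA σ₁ h2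
  change σ₁ = r.map T₂.mor₂ ≫ σ₂ at hσ₂
  obtain ⟨τ, hτ⟩ := hfull _ _ hYheart hB'heart σ₂
  set g' : A⟦(1 : ℤ)⟧ ⟶ B := β.inv ≫ T₂.mor₂ ≫ τ ≫ uB with hg'def
  have hg' : r.map g' = σ :=
    calc r.map g' = r.map β.inv ≫ (r.map T₂.mor₂ ≫ σ₂) ≫ r.map uB := by
          rw [hg'def, ← hτ]
          simp only [CategoryTheory.Functor.map_comp, Category.assoc]
          exact congrArg (r.map β.inv ≫ ·) ((r.map_comp _ _).trans ((congrArg (r.map T₂.mor₂ ≫ ·) (r.map_comp τ uB)).trans (Category.assoc _ _ _).symm))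
      _ = r.map β.inv ≫ σ₁ ≫ r.map uB := by rw [hσ₂]; rfl
      _ = r.map β.inv ≫ σt := by rw [← hσ₁]
      _ = σ := by
          rw [hσtdef, ← Category.assoc, ← CategoryTheory.Functor.map_comp, Iso.inv_hom_id,
            CategoryTheory.Functor.map_id, Category.id_comp]
  -- apply the radical property
  have hrd : IsIso (r.map (𝟙 B - δ ≫ g')) := by
    have := hrad g'
    infer_instance
  have heq : r.map (𝟙 B - δ ≫ g') = 0 := by
    rw [Functor.map_sub, CategoryTheory.Functor.map_id, CategoryTheory.Functor.map_comp, hg', hσdef,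
      IsIso.hom_inv_id, sub_self]
  rw [heq] at hrd
  have hidB : 𝟙 (r.obj B) = 0 := by
    rw [← IsIso.hom_inv_id (0 : r.obj B ⟶ r.obj B), zero_comp]
  have hZB : IsZero (r.obj B) := (IsZero.iff_id_eq_zero _).2 hidB
  have hZA' : IsZero (r.obj (A⟦(1 : ℤ)⟧)) := hZB.of_iso (asIso (r.map δ)).symm
  have hZA1 : IsZero ((r.obj A)⟦(1 : ℤ)⟧) := hZA'.of_iso ((r.commShiftIso (1 : ℤ)).app A).symm
  have hZA : IsZero (r.obj A) := by
    have h' : IsZero (((r.obj A)⟦(1 : ℤ)⟧)⟦(-1 : ℤ)⟧) :=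
      (shiftFunctor C₂ (-1 : ℤ)).map_isZero hZA1
    exact h'.of_iso ((shiftFunctorCompIsoId C₂ (1 : ℤ) (-1 : ℤ) (by ring)).app (r.obj A)).symm
  exact ⟨hZA, hZB⟩

end Paper
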